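/- A group G is circularly orderable if and only if for every finite subset X of G there exists a surjective homomorphism φ from ⟨X⟩ onto a circularly orderable group C and an antisymmetric subsemigroup S of ker(φ) such that X^{-1}X ∩ ker(φ) ⊆ S ∪ S^{-1} ∪ {id}. -/

import Mathlib

/-- `c` is a (left-invariant) circular ordering of `G`. -/
def IsCircularOrdering {G : Type*} [Group G] (c : G → G → G → ℤ) : Prop :=
  (∀ x y z : G, c x y z = 0 ∨ c x y z = 1 ∨ c x y z = -1) ∧
  (∀ x y z : G, c x y z = 0 ↔ (x = y ∨ x = z ∨ y = z)) ∧
  (∀ x₁ x₂ x₃ x₄ : G, c x₁ x₂ x₃ - c x₁ x₂ x₄ + c x₁ x₃ x₄ - c x₂ x₃ x₄ = 0) ∧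
  (∀ g x y z : G, c (g * x) (g * y) (g * z) = c x y z)

/-- A group is circularly orderable if it admits a circular ordering. -/
def CircularlyOrderable (G : Type*) [Group G] : Prop :=
  ∃ c : G → G → G → ℤ, IsCircularOrdering c


open scoped Classical

section aux
variable {H : Type*} {C : Type*}

noncomputable def ddFun [Group H] (S : Set H) (x y : H) : ℤ :=
  if x⁻¹ * y ∈ S then 1 else if y⁻¹ * x ∈ S then -1 else 0

lemma ddFun_antisymm [Group H] {S : Set H} (hanti : ∀ s ∈ S, s⁻¹ ∉ S) (x y : H) :
    ddFun S y x = - ddFun S x y := by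
  unfold ddFun
  by_cases h1 : x⁻¹ * y ∈ S
  · have h2 : y⁻¹ * x ∉ S := by
      intro hm
      exact hanti _ h1 (by simpa [mul_inv_rev] using hm)
    rw [if_neg h2, if_pos h1, if_pos h1]
  · by_cases h2 : y⁻¹ * x ∈ S
    · rw [if_pos h2, if_neg h1, if_pos h2]; norm_num
    · rw [if_neg h2, if_neg h1, if_neg h1, if_neg h2]; norm_num

lemma ddFun_self [Group H] {S : Set H} (hanti : ∀ s ∈ S, s⁻¹ ∉ S) (x : H) :
    ddFun S x x = 0 := by
  have h1 : (1 : H) ∉ S := fun h => hanti 1 h (by simpa using h)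
  unfold ddFun
  rw [inv_mul_cancel, if_neg h1, if_neg h1]

lemma ddFun_inv [Group H] (S : Set H) (g x y : H) :
    ddFun S (g * x) (g * y) = ddFun S x y := by
  unfold ddFun
  simp [mul_inv_rev, mul_assoc, inv_mul_cancel_left]

lemma ddFun_eq_one [Group H] {S : Set H} {x y : H} (h : ddFun S x y = 1) : x⁻¹ * y ∈ S := by
  unfold ddFun at h
  split_ifs at h with h1 h2
  · exact h1
  · exact absurd h (by norm_num)

lemma ddFun_eq_neg_one [Group H] {S : Set H} {x y : H} (h : ddFun S x y = -1) : y⁻¹ * x ∈ S := by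
  unfold ddFun at h
  split_ifs at h with h1 h2
  · exact h2

noncomputable def TFun (a : H → C) (d : H → H → ℤ) (x y z : H) : ℤ :=
  if a x = a y then (if a y = a z then d x y + d y z + d z x else d x y)
  else if a y = a z then d y z else if a z = a x then d z x else 0

lemma keyT (a : H → C) (d : H → H → ℤ)
    (hd : ∀ x y, d y x = - d x y) (x1 x2 x3 x4 : H) :
    TFun a d x1 x2 x3 - TFun a d x1 x2 x4 + TFun a d x1 x3 x4 - TFun a d x2 x3 x4 = 0 := by
  have h0 : ∀ x, d x x = 0 := fun x => by have := hd x x; linarith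
  unfold TFun
  split_ifs <;>
    first
      | linarith [hd x1 x2, hd x1 x3, hd x1 x4, hd x2 x3, hd x2 x4, hd x3 x4,
          h0 x1, h0 x2, h0 x3, h0 x4]
      | (exfalso; grind)

end aux

section body
variable {H : Type*} {C : Type*} [Group H] [Group C]

noncomputable def bodyFun (φ : H →* C) (c' : C → C → C → ℤ) (S : Set H) (x y z : H) : ℤ :=
  TFun (fun u => φ u) (ddFun S) x y z + c' (φ x) (φ y) (φ z)

lemma bodyFun_inv (φ : H →* C) {c' : C → C → C → ℤ} (hc' : IsCircularOrdering c')
    (S : Set H) (g x y z : H) :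
    bodyFun φ c' S (g * x) (g * y) (g * z) = bodyFun φ c' S x y z := by
  unfold bodyFun TFun
  simp only [map_mul, mul_right_inj, ddFun_inv, hc'.2.2.2 (φ g)]

lemma bodyFun_cocycle (φ : H →* C) {c' : C → C → C → ℤ} (hc' : IsCircularOrdering c')
    {S : Set H} (hanti : ∀ s ∈ S, s⁻¹ ∉ S) (x1 x2 x3 x4 : H) :
    bodyFun φ c' S x1 x2 x3 - bodyFun φ c' S x1 x2 x4 + bodyFun φ c' S x1 x3 x4
      - bodyFun φ c' S x2 x3 x4 = 0 := by
  unfold bodyFun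
  have h1 := keyT (fun u => φ u) (ddFun S) (ddFun_antisymm hanti) x1 x2 x3 x4
  have h2 := hc'.2.2.1 (φ x1) (φ x2) (φ x3) (φ x4)
  linarith

lemma bodyFun_spec (φ : H →* C) {c' : C → C → C → ℤ} (hc' : IsCircularOrdering c')
    {S : Set H} (hmul : ∀ a ∈ S, ∀ b ∈ S, a * b ∈ S) (hanti : ∀ s ∈ S, s⁻¹ ∉ S)
    {x y z : H}
    (hxy : x ≠ y → φ x = φ y → (x⁻¹ * y ∈ S ∨ y⁻¹ * x ∈ S))
    (hyz : y ≠ z → φ y = φ z → (y⁻¹ * z ∈ S ∨ z⁻¹ * y ∈ S))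
    (hzx : z ≠ x → φ z = φ x → (z⁻¹ * x ∈ S ∨ x⁻¹ * z ∈ S)) :
    (bodyFun φ c' S x y z = 0 ↔ (x = y ∨ x = z ∨ y = z)) ∧
    (bodyFun φ c' S x y z = 0 ∨ bodyFun φ c' S x y z = 1 ∨ bodyFun φ c' S x y z = -1) := by
  have hpm : ∀ u v : H, u ≠ v → φ u = φ v → (u⁻¹ * v ∈ S ∨ v⁻¹ * u ∈ S) →
      (ddFun S u v = 1 ∨ ddFun S u v = -1) := by
    intro u v hne heq hcov
    unfold ddFun
    rcases hcov with h | h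
    · left; rw [if_pos h]
    · by_cases h' : u⁻¹ * v ∈ S
      · left; rw [if_pos h']
      · right; rw [if_neg h', if_pos h]
  unfold bodyFun TFun
  by_cases h1 : φ x = φ y
  · have hc0 : c' (φ x) (φ y) (φ z) = 0 := (hc'.2.1 _ _ _).mpr (Or.inl h1)
    rw [if_pos h1, hc0, add_zero]
    by_cases h2 : φ y = φ z
    · rw [if_pos h2]
      -- all in one fiber
      by_cases exy : x = y
      · subst exy
        rw [ddFun_self hanti]
        have := ddFun_antisymm hanti x z
        constructor
        · constructor
          · intro _; left; rfl
          · intro _; linarith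
        · left; linarith
      · by_cases eyz : y = z
        · subst eyz
          rw [ddFun_self hanti]
          have := ddFun_antisymm hanti x y
          constructor
          · constructor
            · intro _; right; right; rfl
            · intro _; linarith
          · left; linarith
        · by_cases ezx : x = z
          · subst ezx
            rw [ddFun_self hanti]
            have := ddFun_antisymm hanti x y
            constructor
            · constructor
              · intro _; right; left; rfl
              · intro _; linarith
            · left; linarith
          · -- all distinct, all same fiber
            have h3 : φ z = φ x := (h1.trans h2).symm
            have d1 := hpm x y exy h1 (hxy exy h1)
            have d2 := hpm y z eyz h2 (hyz eyz h2)
            have d3 := hpm z x (fun h => ezx h.symm) h3 (hzx (fun h => ezx h.symm) h3)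
            -- transitivity facts
            have t1 : ddFun S x y = 1 → ddFun S y z = 1 → ddFun S z x = -1 := by
              intro e1 e2
              have hs : x⁻¹ * z ∈ S := by
                have := hmul _ (ddFun_eq_one e1) _ (ddFun_eq_one e2)
                simpa [mul_assoc] using this
              have hns : z⁻¹ * x ∉ S := by
                intro hm; exact hanti _ hs (by simpa [mul_inv_rev] using hm)
              unfold ddFun
              rw [if_neg hns, if_pos hs]
            have t2 : ddFun S x y = -1 → ddFun S y z = -1 → ddFun S z x = 1 := by
              intro e1 e2
              have hs : z⁻¹ * x ∈ S := by
                have := hmul _ (ddFun_eq_neg_one e2) _ (ddFun_eq_neg_one e1)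
                simpa [mul_assoc] using this
              unfold ddFun
              rw [if_pos hs]
            constructor
            · constructor
              · intro h
                rcases d1 with e1 | e1 <;> rcases d2 with e2 | e2 <;> rcases d3 with e3 | e3 <;>
                  rw [e1, e2, e3] at h <;> norm_num at h
              · intro h; exact absurd h (by simp [exy, eyz, ezx])
            · rcases d1 with e1 | e1 <;> rcases d2 with e2 | e2 <;> rcases d3 with e3 | e3 <;>
                first
                  | (rw [e1, e2, e3]; decide)
                  | (have hh := t1 e1 e2; rw [e3] at hh; norm_num at hh)
                  | (have hh := t2 e1 e2; rw [e3] at hh; norm_num at hh)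
    · -- φ x = φ y ≠ φ z
      rw [if_neg h2]
      have hzy : z ≠ y := fun h => h2 (congrArg φ h.symm)
      have hzx' : z ≠ x := fun h => h2 (by rw [congrArg φ h, h1])
      by_cases exy : x = y
      · subst exy
        rw [ddFun_self hanti]
        simp
      · have d1 := hpm x y exy h1 (hxy exy h1)
        constructor
        · constructor
          · intro h; omega
          · intro h
            rcases h with h | h | h
            · exact absurd h exy
            · exact absurd h.symm hzx'
            · exact absurd h.symm hzy
        · omega
  · rw [if_neg h1]
    have hxy' : x ≠ y := fun h => h1 (congrArg φ h)
    by_cases h2 : φ y = φ z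
    · -- φ y = φ z ≠ φ x
      rw [if_pos h2]
      have hc0 : c' (φ x) (φ y) (φ z) = 0 := (hc'.2.1 _ _ _).mpr (Or.inr (Or.inr h2))
      rw [hc0, add_zero]
      have hxz : x ≠ z := fun h => h1 (by rw [congrArg φ h, h2])
      by_cases eyz : y = z
      · subst eyz
        rw [ddFun_self hanti]
        simp [hxy', hxz]
      · have d2 := hpm y z eyz h2 (hyz eyz h2)
        constructor
        · constructor
          · intro h; omega
          · intro h
            rcases h with h | h | h
            · exact absurd h hxy'
            · exact absurd h hxz
            · exact absurd h eyz
        · omega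
    · rw [if_neg h2]
      have hyz' : y ≠ z := fun h => h2 (congrArg φ h)
      by_cases h3 : φ z = φ x
      · rw [if_pos h3]
        have hc0 : c' (φ x) (φ y) (φ z) = 0 := (hc'.2.1 _ _ _).mpr (Or.inr (Or.inl h3.symm))
        rw [hc0, add_zero]
        by_cases ezx : z = x
        · subst ezx
          rw [ddFun_self hanti]
          simp [hxy', hyz']
        · have d3 := hpm z x ezx h3 (hzx ezx h3)
          constructor
          · constructor
            · intro h; omega
            · intro h
              rcases h with h | h | h
              · exact absurd h hxy'
              · exact absurd h.symm ezx
              · exact absurd h hyz'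
          · omega
      · rw [if_neg h3, zero_add]
        have hxz : x ≠ z := fun h => h3 (congrArg φ h.symm)
        have hcne : c' (φ x) (φ y) (φ z) ≠ 0 := by
          intro h
          rcases (hc'.2.1 _ _ _).mp h with a | a | a
          · exact h1 a
          · exact h3 a.symm
          · exact h2 a
        constructor
        · constructor
          · intro h; exact absurd h hcne
          · intro h
            rcases h with h | h | h
            · exact absurd h hxy'
            · exact absurd h hxz
            · exact absurd h hyz'
        · exact hc'.1 _ _ _
end body

section lim
variable {α : Type*}

noncomputable def climFun (U : Ultrafilter α) (f : α → ℤ) : ℤ :=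
  if {a | f a = 1} ∈ U then 1 else if {a | f a = -1} ∈ U then -1 else 0

lemma climFun_values (U : Ultrafilter α) (f : α → ℤ) :
    climFun U f = 0 ∨ climFun U f = 1 ∨ climFun U f = -1 := by
  unfold climFun
  split_ifs <;> simp

lemma climFun_spec (U : Ultrafilter α) (f : α → ℤ)
    (hf : {a | f a = 0 ∨ f a = 1 ∨ f a = -1} ∈ U) :
    {a | f a = climFun U f} ∈ U := by
  unfold climFun
  split_ifs with h1 h2
  · exact h1
  · exact h2
  · have h1' : {a | f a = 1}ᶜ ∈ U := (Ultrafilter.compl_mem_iff_notMem).mpr h1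
    have h2' : {a | f a = -1}ᶜ ∈ U := (Ultrafilter.compl_mem_iff_notMem).mpr h2
    have := Filter.inter_mem hf (Filter.inter_mem h1' h2')
    refine Filter.mem_of_superset this ?_
    rintro a ⟨ha, ha1, ha2⟩
    simp only [Set.mem_compl_iff, Set.mem_setOf_eq] at *
    rcases ha with h | h | h
    · exact h
    · exact absurd h ha1
    · exact absurd h ha2

end lim

lemma IsCircularOrdering.subgroup {G : Type*} [Group G] {c : G → G → G → ℤ}
    (hc : IsCircularOrdering c) (K : Subgroup G) :
    IsCircularOrdering (fun u v w : K => c ↑u ↑v ↑w) := by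
  refine ⟨fun x y z => hc.1 _ _ _, fun x y z => ?_, fun a b u v => hc.2.2.1 _ _ _ _,
    fun g x y z => hc.2.2.2 ↑g ↑x ↑y ↑z⟩
  rw [hc.2.1]
  simp only [SetLike.coe_eq_coe]


noncomputable def cfFun {G : Type*} [Group G] {C : Finset G → Type*} [∀ X, Group (C X)]
    (φ : ∀ X : Finset G, Subgroup.closure (X : Set G) →* C X)
    (c' : ∀ X, C X → C X → C X → ℤ)
    (S : ∀ X : Finset G, Set (Subgroup.closure (X : Set G)))
    (X : Finset G) (x y z : G) : ℤ :=
  if h : x ∈ Subgroup.closure (X : Set G) ∧ y ∈ Subgroup.closure (X : Set G) ∧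
      z ∈ Subgroup.closure (X : Set G) then
    bodyFun (φ X) (c' X) (S X) ⟨x, h.1⟩ ⟨y, h.2.1⟩ ⟨z, h.2.2⟩
  else 0


/-- `G` is circularly orderable iff for each finite `X ⊆ G` there is a surjection
`φ : ⟨X⟩ → C` onto a circularly orderable group and an antisymmetric subsemigroup
`S ⊆ ker φ` with `X⁻¹X ∩ ker φ ⊆ S ∪ S⁻¹ ∪ {1}`. -/
theorem circularlyOrderable_iff_semigroup {G : Type u} [Group G] :
    CircularlyOrderable G ↔
      ∀ X : Finset G,
        ∃ (C : Type u) (_ : Group C) (φ : Subgroup.closure (X : Set G) →* C),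
          Function.Surjective φ ∧ CircularlyOrderable C ∧
          ∃ S : Set (Subgroup.closure (X : Set G)),
            (∀ a ∈ S, ∀ b ∈ S, a * b ∈ S) ∧
            (∀ s ∈ S, s⁻¹ ∉ S) ∧
            (∀ s ∈ S, s ∈ φ.ker) ∧
            ∀ g : Subgroup.closure (X : Set G),
              (∃ x ∈ X, ∃ y ∈ X, (g : G) = x⁻¹ * y) → g ∈ φ.ker →
                (g ∈ S ∨ g⁻¹ ∈ S ∨ g = 1) := by
  constructor
  · rintro ⟨c, hc⟩ X
    refine ⟨Subgroup.closure (X : Set G), inferInstance, MonoidHom.id _, Function.surjective_id,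
      ⟨_, hc.subgroup _⟩, ∅, by simp, by simp, by simp, ?_⟩
    intro g _ hkerg
    exact Or.inr (Or.inr (by simpa using hkerg))
  · intro h
    classical
    choose C inst φ hsurj hCO S hmul hanti hker hcov using h
    letI : ∀ X, Group (C X) := inst
    have hCO' : ∀ X, ∃ cc : C X → C X → C X → ℤ, IsCircularOrdering cc := hCO
    choose c' hc' using hCO'
    set U : Ultrafilter (Finset G) := Ultrafilter.of Filter.atTop with hUdef
    have hU : ∀ F : Finset G, {X : Finset G | F ≤ X} ∈ U :=
      fun F => Ultrafilter.of_le Filter.atTop (Filter.Ici_mem_atTop F)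
    have hmemX : ∀ (X : Finset G) (w : G), w ∈ X → w ∈ Subgroup.closure (X : Set G) :=
      fun X w hw => Subgroup.subset_closure (Finset.mem_coe.mpr hw)
    have hcf_eq : ∀ (X : Finset G) (x y z : G) (hx : x ∈ Subgroup.closure (X : Set G))
        (hy : y ∈ Subgroup.closure (X : Set G)) (hz : z ∈ Subgroup.closure (X : Set G)),
        cfFun φ c' S X x y z = bodyFun (φ X) (c' X) (S X) ⟨x, hx⟩ ⟨y, hy⟩ ⟨z, hz⟩ := by
      intro X x y z hx hy hz
      unfold cfFun
      rw [dif_pos ⟨hx, hy, hz⟩]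
    have hGood : ∀ (X : Finset G) (x y : G), x ∈ X → y ∈ X →
        ∀ (hx : x ∈ Subgroup.closure (X : Set G)) (hy : y ∈ Subgroup.closure (X : Set G)),
        (⟨x, hx⟩ : Subgroup.closure (X : Set G)) ≠ ⟨y, hy⟩ →
        φ X ⟨x, hx⟩ = φ X ⟨y, hy⟩ →
        ((⟨x, hx⟩ : Subgroup.closure (X : Set G))⁻¹ * ⟨y, hy⟩ ∈ S X ∨
         (⟨y, hy⟩ : Subgroup.closure (X : Set G))⁻¹ * ⟨x, hx⟩ ∈ S X) := by
      intro X x y hx' hy' hx hy hne heq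
      have hkerg : (⟨x, hx⟩ : Subgroup.closure (X : Set G))⁻¹ * ⟨y, hy⟩ ∈ (φ X).ker := by
        rw [MonoidHom.mem_ker, map_mul, map_inv, heq, inv_mul_cancel]
      have hdiff : (((⟨x, hx⟩ : Subgroup.closure (X : Set G))⁻¹ * ⟨y, hy⟩ :
          Subgroup.closure (X : Set G)) : G) = x⁻¹ * y := rfl
      rcases hcov X _ ⟨x, hx', y, hy', hdiff⟩ hkerg with hs | hs | hs
      · exact Or.inl hs
      · refine Or.inr ?_
        rwa [mul_inv_rev, inv_inv] at hs
      · exact absurd (by rwa [inv_mul_eq_one] at hs) hne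
    have hval : ∀ (X : Finset G) (x y z : G), x ∈ X → y ∈ X → z ∈ X →
        (cfFun φ c' S X x y z = 0 ↔ (x = y ∨ x = z ∨ y = z)) ∧
        (cfFun φ c' S X x y z = 0 ∨ cfFun φ c' S X x y z = 1 ∨ cfFun φ c' S X x y z = -1) := by
      intro X x y z hx' hy' hz'
      have hx := hmemX X x hx'
      have hy := hmemX X y hy'
      have hz := hmemX X z hz'
      rw [hcf_eq X x y z hx hy hz]
      have spec := bodyFun_spec (φ X) (hc' X) (hmul X) (hanti X)
        (hGood X x y hx' hy' hx hy) (hGood X y z hy' hz' hy hz) (hGood X z x hz' hx' hz hx)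
      refine ⟨?_, spec.2⟩
      rw [spec.1]
      simp only [Subtype.mk.injEq]
    have hlim : ∀ x y z : G,
        {X : Finset G | ({x, y, z} : Finset G) ≤ X ∧
          cfFun φ c' S X x y z = climFun U (fun X => cfFun φ c' S X x y z)} ∈ U := by
      intro x y z
      have h1 := hU {x, y, z}
      have h2 : {X : Finset G | cfFun φ c' S X x y z = 0 ∨ cfFun φ c' S X x y z = 1 ∨
          cfFun φ c' S X x y z = -1} ∈ U := by
        refine Filter.mem_of_superset h1 ?_
        intro X hX
        have hsub : ({x, y, z} : Finset G) ⊆ X := hX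
        exact (hval X x y z (hsub (by simp)) (hsub (by simp)) (hsub (by simp))).2
      have h3 := climFun_spec U _ h2
      have h4 := Filter.inter_mem h1 h3
      exact h4
    refine ⟨fun x y z => climFun U (fun X => cfFun φ c' S X x y z), ?_, ?_, ?_, ?_⟩
    · intro x y z
      exact climFun_values U _
    · intro x y z
      obtain ⟨X, hsub, heq⟩ := Ultrafilter.nonempty_of_mem (hlim x y z)
      have hsub' : ({x, y, z} : Finset G) ⊆ X := hsub
      have this1 := (hval X x y z (hsub' (by simp)) (hsub' (by simp)) (hsub' (by simp))).1
      rw [heq] at this1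
      exact this1
    · intro x1 x2 x3 x4
      have h5 := hU {x1, x2, x3, x4}
      have hi := Filter.inter_mem h5 (Filter.inter_mem (hlim x1 x2 x3)
        (Filter.inter_mem (hlim x1 x2 x4) (Filter.inter_mem (hlim x1 x3 x4) (hlim x2 x3 x4))))
      obtain ⟨X, hX5, hX1, hX2, hX3, hX4⟩ := Ultrafilter.nonempty_of_mem hi
      have hsub : ({x1, x2, x3, x4} : Finset G) ⊆ X := hX5
      have m1 := hmemX X x1 (hsub (by simp))
      have m2 := hmemX X x2 (hsub (by simp))
      have m3 := hmemX X x3 (hsub (by simp))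
      have m4 := hmemX X x4 (hsub (by simp))
      have key : climFun U (fun X => cfFun φ c' S X x1 x2 x3)
          - climFun U (fun X => cfFun φ c' S X x1 x2 x4)
          + climFun U (fun X => cfFun φ c' S X x1 x3 x4)
          - climFun U (fun X => cfFun φ c' S X x2 x3 x4) = 0 := by
        rw [← hX1.2, ← hX2.2, ← hX3.2, ← hX4.2,
          hcf_eq X x1 x2 x3 m1 m2 m3, hcf_eq X x1 x2 x4 m1 m2 m4,
          hcf_eq X x1 x3 x4 m1 m3 m4, hcf_eq X x2 x3 x4 m2 m3 m4]
        exact bodyFun_cocycle (φ X) (hc' X) (hanti X) _ _ _ _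
      exact key
    · intro g x y z
      have h5 := hU {g, x, y, z}
      have hi := Filter.inter_mem h5 (Filter.inter_mem (hlim (g * x) (g * y) (g * z)) (hlim x y z))
      obtain ⟨X, hX5, hXA, hXB⟩ := Ultrafilter.nonempty_of_mem hi
      have hsub : ({g, x, y, z} : Finset G) ⊆ X := hX5
      have mg := hmemX X g (hsub (by simp))
      have mx := hmemX X x (hsub (by simp))
      have my := hmemX X y (hsub (by simp))
      have mz := hmemX X z (hsub (by simp))
      have e1 : (⟨g * x, mul_mem mg mx⟩ : Subgroup.closure (X : Set G)) = ⟨g, mg⟩ * ⟨x, mx⟩ := rfl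
      have e2 : (⟨g * y, mul_mem mg my⟩ : Subgroup.closure (X : Set G)) = ⟨g, mg⟩ * ⟨y, my⟩ := rfl
      have e3 : (⟨g * z, mul_mem mg mz⟩ : Subgroup.closure (X : Set G)) = ⟨g, mg⟩ * ⟨z, mz⟩ := rfl
      have key : climFun U (fun X => cfFun φ c' S X (g * x) (g * y) (g * z))
          = climFun U (fun X => cfFun φ c' S X x y z) := by
        rw [← hXA.2, ← hXB.2,
          hcf_eq X (g * x) (g * y) (g * z) (mul_mem mg mx) (mul_mem mg my) (mul_mem mg mz),
          hcf_eq X x y z mx my mz, e1, e2, e3]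
        exact bodyFun_inv (φ X) (hc' X) (S X) _ _ _ _
      exact key
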